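/- Let F ⊆ K be a field extension, T₁,…,T_k ∈ GLₙ(F) ⊆ GLₙ(K), and let W be an F-subspace of Fⁿ with K-span W̄ ⊆ Kⁿ. Then dim_F(W + Σᵢ TᵢW) = dim_K(W̄ + Σᵢ TᵢW̄). Consequently, if (Kⁿ, {Tᵢ}) is an ε-dimension expander then so is (Fⁿ, {Tᵢ}). -/

import Mathlib

open Module

/-- `(Fⁿ, {Tᵢ})` is an `ε`-dimension expander. -/
def IsDimensionExpander (F : Type*) [Field F] (n k : ℕ)
    (T : Fin k → Matrix (Fin n) (Fin n) F) (ε : ℝ) : Prop :=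
  ∀ W : Submodule F (Fin n → F), (finrank F W : ℝ) ≤ (n : ℝ) / 2 →
    ((finrank F ↥(W ⊔ ⨆ i, W.map (T i).mulVecLin)) : ℝ) ≥ (1 + ε) * finrank F W

/-- The `K`-span in `Kⁿ` of an `F`-subspace `W ⊆ Fⁿ`, for a field extension `F ⊆ K`. -/
def kSpan (F K : Type*) [Field F] [Field K] [Algebra F K] (n : ℕ)
    (W : Submodule F (Fin n → F)) : Submodule K (Fin n → K) :=
  Submodule.span K ((fun v (i : Fin n) => algebraMap F K (v i)) '' (W : Set (Fin n → F)))

set_option maxHeartbeats 1000000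
set_option synthInstance.maxHeartbeats 400000

section Aux
open TensorProduct
variable (F K : Type*) [Field F] [Field K] [Algebra F K] (n : ℕ)

private def iotaFK : (Fin n → F) → (Fin n → K) := fun v i => algebraMap F K (v i)

private lemma kSpan_eq_span (W : Submodule F (Fin n → F)) :
    kSpan F K n W = Submodule.span K (iotaFK F K n '' (W : Set (Fin n → F))) := rfl

private lemma span_image_span (s : Set (Fin n → F)) :
    Submodule.span K (iotaFK F K n '' ↑(Submodule.span F s)) =
      Submodule.span K (iotaFK F K n '' s) := by
  refine le_antisymm (Submodule.span_le.mpr ?_)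
    (Submodule.span_mono (Set.image_mono Submodule.subset_span))
  rintro - ⟨x, hx, rfl⟩
  induction hx using Submodule.span_induction with
  | mem x hx => exact Submodule.subset_span ⟨x, hx, rfl⟩
  | zero =>
      have : iotaFK F K n (0 : Fin n → F) = 0 := by funext i; simp [iotaFK]
      rw [this]; exact Submodule.zero_mem _
  | add x y _ _ hx hy =>
      have : iotaFK F K n (x + y) = iotaFK F K n x + iotaFK F K n y := by
        funext i; simp [iotaFK]
      rw [this]; exact Submodule.add_mem _ hx hy
  | smul c x _ hx =>
      have : iotaFK F K n (c • x) = algebraMap F K c • iotaFK F K n x := by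
        funext i; simp [iotaFK, Algebra.smul_def]
      rw [this]; exact Submodule.smul_mem _ _ hx

private lemma finrank_kSpan (W : Submodule F (Fin n → F)) :
    finrank K ↥(kSpan F K n W) = finrank F ↥W := by
  have hks : kSpan F K n W = Submodule.map
      (TensorProduct.piScalarRight F K K (Fin n) : K ⊗[F] (Fin n → F) →ₗ[K] (Fin n → K))
      (W.baseChange K) := by
    have h0 : W.baseChange K
        = Submodule.span K ((TensorProduct.mk F K (Fin n → F) 1) '' (W : Set (Fin n → F))) := by
      rw [Submodule.baseChange_eq_span, Submodule.map_coe]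
    rw [h0, Submodule.map_span, ← Set.image_comp, kSpan]
    congr 1
    apply Set.image_congr
    intro v _
    funext i
    simp [Algebra.algebraMap_eq_smul_one]
  have hrange : LinearMap.range ((W.subtype).baseChange K) = W.baseChange K := by
    refine le_antisymm ?_ ?_
    · rintro - ⟨x, rfl⟩
      induction x with
      | zero => simp
      | tmul a m =>
          simpa using Submodule.tmul_mem_baseChange_of_mem a m.2
      | add x y hx hy => rw [map_add]; exact Submodule.add_mem _ hx hy
    · rw [Submodule.baseChange]
  have hinj : Function.Injective ((W.subtype).baseChange K) := by
    rw [LinearMap.baseChange_eq_ltensor]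
    exact Module.Flat.lTensor_preserves_injective_linearMap _ W.injective_subtype
  have h2 : finrank K (K ⊗[F] ↥W)
      = finrank K ↥(LinearMap.range ((W.subtype).baseChange K)) :=
    (LinearEquiv.ofInjective _ hinj).finrank_eq
  have h1 : finrank K ↥(W.baseChange K) = finrank F ↥W := by
    rw [← hrange, ← h2, Module.finrank_baseChange]
  rw [hks, LinearEquiv.finrank_map_eq, h1]

private lemma kSpan_sup (A B : Submodule F (Fin n → F)) :
    kSpan F K n (A ⊔ B) = kSpan F K n A ⊔ kSpan F K n B := by
  have h : (A ⊔ B : Submodule F (Fin n → F)) = Submodule.span F (↑A ∪ ↑B) := by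
    rw [Submodule.span_union, Submodule.span_eq, Submodule.span_eq]
  rw [kSpan_eq_span, kSpan_eq_span, kSpan_eq_span, h, span_image_span, Set.image_union,
    Submodule.span_union]

private lemma kSpan_iSup {κ : Type*} (V : κ → Submodule F (Fin n → F)) :
    kSpan F K n (⨆ i, V i) = ⨆ i, kSpan F K n (V i) := by
  simp only [kSpan_eq_span]
  rw [Submodule.iSup_eq_span, span_image_span, Set.image_iUnion, Submodule.span_iUnion]

private lemma kSpan_map (M : Matrix (Fin n) (Fin n) F) (W : Submodule F (Fin n → F)) :
    kSpan F K n (W.map M.mulVecLin)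
      = (kSpan F K n W).map (M.map (algebraMap F K)).mulVecLin := by
  rw [kSpan_eq_span, kSpan_eq_span, Submodule.map_span, Submodule.map_coe, ← Set.image_comp,
    ← Set.image_comp]
  congr 1
  apply Set.image_congr
  intro v _
  funext j
  exact RingHom.map_mulVec (algebraMap F K) M v j

private lemma kSpan_key (k : ℕ) (T : Fin k → Matrix (Fin n) (Fin n) F)
    (W : Submodule F (Fin n → F)) :
    kSpan F K n (W ⊔ ⨆ i, W.map (T i).mulVecLin)
      = kSpan F K n W ⊔ ⨆ i, (kSpan F K n W).map ((T i).map (algebraMap F K)).mulVecLin := by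
  rw [kSpan_sup, kSpan_iSup]
  congr 1
  exact iSup_congr fun i => kSpan_map F K n (T i) W

end Aux

/-- For a field extension `F ⊆ K` and matrices `Tᵢ` over `F`, the dimension of
`W + Σᵢ TᵢW` over `F` equals the dimension of `W̄ + Σᵢ TᵢW̄` over `K`, where `W̄` is the
`K`-span of `W`; consequently if `(Kⁿ, {Tᵢ})` is an `ε`-dimension expander then so is
`(Fⁿ, {Tᵢ})`. -/
theorem dimension_expander_descends_along_field_extension
    (F K : Type*) [Field F] [Field K] [Algebra F K] (n k : ℕ)
    (T : Fin k → Matrix (Fin n) (Fin n) F) (ε : ℝ) :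
    (∀ W : Submodule F (Fin n → F),
      finrank F ↥(W ⊔ ⨆ i, W.map (T i).mulVecLin)
        = finrank K ↥(kSpan F K n W ⊔ ⨆ i,
            (kSpan F K n W).map ((T i).map (algebraMap F K)).mulVecLin)) ∧
    (IsDimensionExpander K n k (fun i => (T i).map (algebraMap F K)) ε →
      IsDimensionExpander F n k T ε) := by
  constructor
  · intro W
    rw [← kSpan_key F K n k T W, finrank_kSpan]
  · intro h W hW
    have hfr := finrank_kSpan F K n W
    have hb : (finrank K ↥(kSpan F K n W) : ℝ) ≤ (n : ℝ) / 2 := by rw [hfr]; exact hW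
    have h2 := h (kSpan F K n W) hb
    have hkey : finrank F ↥(W ⊔ ⨆ i, W.map (T i).mulVecLin)
        = finrank K ↥(kSpan F K n W ⊔ ⨆ i,
            (kSpan F K n W).map ((T i).map (algebraMap F K)).mulVecLin) := by
      rw [← kSpan_key F K n k T W, finrank_kSpan]
    rw [ge_iff_le, hkey, ← hfr]
    exact h2
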